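/- Let M and K be symmetric n×n real matrices, let A be the 2n×2n block matrix [[0, M],[−K, 0]], and for given n×n matrices M̃ and K̃ define the kick matrix B(c) = [[I, 0],[−c K̃, I]] and the move matrix C(c) = [[I, c M̃],[0, I]]. Then with the τ²-corrected matrices M̃ = M − (τ²/6)·M(KM) and K̃ = K + (τ²/12)·(KM)K, as τ → 0, B(τ/2)·C(τ)·B(τ/2) − exp(τA) = O(τ⁵). -/

import Mathlib

open Matrix

noncomputable def Dmat (n : ℕ) (M K : Matrix (Fin n) (Fin n) ℝ) (τ : ℝ) :
    Matrix (Fin n ⊕ Fin n) (Fin n ⊕ Fin n) ℝ :=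
  fromBlocks ((τ / 144) • (M * (K * (M * (K * (M * K)))))) 0
    (-((τ ^ 2 / 192) • (K * (M * (K * (M * (K * (M * K))))))) -
      (τ ^ 4 / 3456) • (K * (M * (K * (M * (K * (M * (K * (M * K)))))))))
    ((τ / 144) • (K * (M * (K * (M * (K * M))))))

theorem kmk_eq (n : ℕ) (M K : Matrix (Fin n) (Fin n) ℝ) (τ : ℝ) :
    Matrix.fromBlocks 1 0
          (-((τ / 2) • (K + (τ ^ 2 / 12) • ((K * M) * K)))) 1 *
        Matrix.fromBlocks 1 (τ • (M - (τ ^ 2 / 6) • (M * (K * M)))) 0 1 *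
        Matrix.fromBlocks 1 0
          (-((τ / 2) • (K + (τ ^ 2 / 12) • ((K * M) * K)))) 1 =
      (∑ k ∈ Finset.range 5, (τ ^ k * ((k.factorial : ℝ))⁻¹) • (Matrix.fromBlocks 0 M (-K) 0) ^ k) +
        τ ^ 5 • Dmat n M K τ := by
  have h2 : (Matrix.fromBlocks 0 M (-K) 0 : Matrix (Fin n ⊕ Fin n) (Fin n ⊕ Fin n) ℝ) ^ 2
      = Matrix.fromBlocks (-(M * K)) 0 0 (-(K * M)) := by
    rw [sq, fromBlocks_multiply]; simp
  have h3 : (Matrix.fromBlocks 0 M (-K) 0 : Matrix (Fin n ⊕ Fin n) (Fin n ⊕ Fin n) ℝ) ^ 3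
      = Matrix.fromBlocks 0 (-(M * (K * M))) (K * (M * K)) 0 := by
    rw [pow_succ, h2, fromBlocks_multiply]; simp [mul_assoc]
  have h4 : (Matrix.fromBlocks 0 M (-K) 0 : Matrix (Fin n ⊕ Fin n) (Fin n ⊕ Fin n) ℝ) ^ 4
      = Matrix.fromBlocks (M * (K * (M * K))) 0 0 (K * (M * (K * M))) := by
    rw [show (4:ℕ) = 3 + 1 from rfl, pow_succ, h3, fromBlocks_multiply]; simp [mul_assoc]
  rw [fromBlocks_multiply, fromBlocks_multiply]
  simp only [Finset.sum_range_succ, Finset.sum_range_zero, pow_zero, pow_one, h2, h3, h4,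
    Nat.factorial, Nat.cast_ofNat, Nat.cast_one, Dmat]
  norm_num
  rw [← fromBlocks_one (l := Fin n) (m := Fin n) (α := ℝ)]
  simp only [fromBlocks_smul, fromBlocks_add, smul_zero, smul_neg]
  rw [fromBlocks_inj]
  refine ⟨?_, ?_, ?_, ?_⟩ <;>
  · simp only [Matrix.mul_one, Matrix.one_mul, Matrix.mul_zero, Matrix.zero_mul, add_zero,
      zero_add, mul_add, add_mul, Matrix.mul_smul, Matrix.smul_mul, smul_add, smul_sub,
      sub_mul, Matrix.mul_sub, smul_smul, mul_assoc, neg_mul, mul_neg, smul_neg, neg_neg,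
      neg_add, Matrix.neg_mul, Matrix.mul_neg]
    module

open Asymptotics Filter Matrix

section Ana

variable {ι : Type*} [Fintype ι] [DecidableEq ι]

attribute [local instance] Matrix.normedAddCommGroup
attribute [local instance] Matrix.normedSpace

lemma sup_norm_mul_le (X Y : Matrix ι ι ℝ) :
    ‖X * Y‖ ≤ (Fintype.card ι : ℝ) * ‖X‖ * ‖Y‖ := by
  have hnn : (0:ℝ) ≤ (Fintype.card ι : ℝ) * ‖X‖ * ‖Y‖ := by positivity
  rw [Matrix.norm_le_iff hnn]
  intro i j
  rw [Matrix.mul_apply]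
  calc ‖∑ k, X i k * Y k j‖ ≤ ∑ k, ‖X i k * Y k j‖ := norm_sum_le _ _
    _ ≤ ∑ _k : ι, ‖X‖ * ‖Y‖ := by
        refine Finset.sum_le_sum fun k _ => ?_
        rw [norm_mul]
        exact mul_le_mul (Matrix.norm_entry_le_entrywise_sup_norm X)
          (Matrix.norm_entry_le_entrywise_sup_norm Y) (norm_nonneg _) (norm_nonneg _)
    _ = (Fintype.card ι : ℝ) * ‖X‖ * ‖Y‖ := by
        rw [Finset.sum_const, Finset.card_univ, nsmul_eq_mul, mul_assoc]

lemma sup_norm_one_le : ‖(1 : Matrix ι ι ℝ)‖ ≤ 1 := by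
  rw [Matrix.norm_le_iff zero_le_one]
  intro i j
  rw [Matrix.one_apply]
  split <;> simp

lemma sup_norm_pow_le (X : Matrix ι ι ℝ) (k : ℕ) :
    ‖X ^ k‖ ≤ ((Fintype.card ι : ℝ) * ‖X‖ + 1) ^ k := by
  induction k with
  | zero => simpa using sup_norm_one_le
  | succ k ih =>
    have hb : (0:ℝ) ≤ (Fintype.card ι : ℝ) * ‖X‖ + 1 := by positivity
    calc ‖X ^ (k+1)‖ = ‖X ^ k * X‖ := by rw [pow_succ]
      _ ≤ (Fintype.card ι : ℝ) * ‖X ^ k‖ * ‖X‖ := sup_norm_mul_le _ _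
      _ ≤ ((Fintype.card ι : ℝ) * ‖X‖ + 1) ^ k * ((Fintype.card ι : ℝ) * ‖X‖ + 1) := by
          nlinarith [norm_nonneg (X ^ k), norm_nonneg X, pow_nonneg hb k,
            Nat.cast_nonneg (α := ℝ) (Fintype.card ι)]
      _ = ((Fintype.card ι : ℝ) * ‖X‖ + 1) ^ (k+1) := (pow_succ _ _).symm

lemma exp_taylor_tail (X : Matrix ι ι ℝ) :
    (fun τ : ℝ => NormedSpace.exp (τ • X) -
        ∑ k ∈ Finset.range 5, (τ ^ k * ((k.factorial : ℝ))⁻¹) • X ^ k)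
      =O[nhds (0 : ℝ)] fun τ : ℝ => τ ^ 5 := by
  set b : ℝ := (Fintype.card ι : ℝ) * ‖X‖ + 1 with hb_def
  have hb0 : (0:ℝ) ≤ b := by positivity
  set f : ℝ → ℕ → Matrix ι ι ℝ := fun τ n => (τ ^ n * ((n.factorial : ℝ))⁻¹) • X ^ n with hf_def
  have hfn : ∀ (τ : ℝ) (n : ℕ), ‖f τ n‖ ≤ (|τ| * b) ^ n / n.factorial := by
    intro τ n
    rw [hf_def, norm_smul, Real.norm_eq_abs, abs_mul, abs_pow, abs_inv, abs_of_nonneg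
      (by positivity : (0:ℝ) ≤ (n.factorial : ℝ)), mul_pow]
    calc |τ| ^ n * (n.factorial : ℝ)⁻¹ * ‖X ^ n‖
        ≤ |τ| ^ n * (n.factorial : ℝ)⁻¹ * b ^ n := by
          refine mul_le_mul_of_nonneg_left (sup_norm_pow_le X n) (by positivity)
      _ = |τ| ^ n * b ^ n / n.factorial := by ring
  have hsum : ∀ τ : ℝ, Summable (f τ) := fun τ =>
    Summable.of_norm_bounded (Real.summable_pow_div_factorial (|τ| * b)) (hfn τ)
  have hexp : ∀ τ : ℝ, NormedSpace.exp (τ • X) = ∑' n, f τ n := by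
    intro τ
    rw [NormedSpace.exp_eq_tsum ℝ]
    exact tsum_congr fun n => by rw [hf_def, smul_pow, smul_smul, mul_comm]
  have htail : ∀ τ : ℝ,
      NormedSpace.exp (τ • X) - ∑ k ∈ Finset.range 5, f τ k = ∑' n, f τ (n + 5) := by
    intro τ
    rw [hexp τ, sub_eq_iff_eq_add, ← Summable.sum_add_tsum_nat_add 5 (hsum τ), add_comm]
  rw [isBigO_iff]
  refine ⟨b ^ 5 * ∑' n : ℕ, b ^ n / n.factorial,
    Filter.eventually_iff_exists_mem.2 ⟨Metric.closedBall 0 1,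
      Metric.closedBall_mem_nhds 0 one_pos, fun τ hτ => ?_⟩⟩
  have hτ1 : |τ| ≤ 1 := by simpa [Real.norm_eq_abs] using Metric.mem_closedBall.1 hτ
  have hbound : ∀ n : ℕ, ‖f τ (n + 5)‖ ≤ |τ| ^ 5 * b ^ 5 * (b ^ n / n.factorial) := by
    intro n
    calc ‖f τ (n + 5)‖ ≤ (|τ| * b) ^ (n + 5) / (n + 5).factorial := hfn τ _
      _ = |τ| ^ n * |τ| ^ 5 * (b ^ 5 * b ^ n) / (n + 5).factorial := by
          rw [mul_pow]; ring
      _ ≤ 1 * |τ| ^ 5 * (b ^ 5 * b ^ n) / n.factorial := by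
          gcongr
          · exact pow_le_one₀ (abs_nonneg τ) hτ1
          · omega
      _ = |τ| ^ 5 * b ^ 5 * (b ^ n / n.factorial) := by ring
  have hhs : HasSum (fun n : ℕ => |τ| ^ 5 * b ^ 5 * (b ^ n / n.factorial))
      (|τ| ^ 5 * b ^ 5 * ∑' n : ℕ, b ^ n / n.factorial) := by
    exact (Real.summable_pow_div_factorial b).hasSum.mul_left _
  calc ‖NormedSpace.exp (τ • X) - ∑ k ∈ Finset.range 5, f τ k‖
      = ‖∑' n, f τ (n + 5)‖ := by rw [htail τ]
    _ ≤ |τ| ^ 5 * b ^ 5 * ∑' n : ℕ, b ^ n / n.factorial := tsum_of_norm_bounded hhs hbound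
    _ = b ^ 5 * (∑' n : ℕ, b ^ n / n.factorial) * ‖τ ^ 5‖ := by
        rw [norm_pow, Real.norm_eq_abs]; ring

end Ana

attribute [local instance] Matrix.normedAddCommGroup
attribute [local instance] Matrix.normedSpace

theorem kick_move_kick_quadratic_hamiltonian_order4
    (n : ℕ) (M K : Matrix (Fin n) (Fin n) ℝ) (hM : M.IsSymm) (hK : K.IsSymm) :
    (fun τ : ℝ =>
        Matrix.fromBlocks 1 0
              (-((τ / 2) • (K + (τ ^ 2 / 12) • ((K * M) * K)))) 1 *
            Matrix.fromBlocks 1 (τ • (M - (τ ^ 2 / 6) • (M * (K * M)))) 0 1 *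
            Matrix.fromBlocks 1 0
              (-((τ / 2) • (K + (τ ^ 2 / 12) • ((K * M) * K)))) 1 -
          NormedSpace.exp (τ • Matrix.fromBlocks 0 M (-K) 0))
      =O[nhds (0 : ℝ)] fun τ : ℝ => τ ^ 5 := by
  have hmono : ∀ (j : ℕ), 5 ≤ j → ∀ (c : ℝ)
      (E : Matrix (Fin n ⊕ Fin n) (Fin n ⊕ Fin n) ℝ),
      (fun τ : ℝ => (τ ^ j / c) • E) =O[nhds (0:ℝ)] fun τ : ℝ => τ ^ 5 := by
    intro j hj c E
    have hp : (fun τ : ℝ => τ ^ j) =O[nhds (0:ℝ)] fun τ : ℝ => τ ^ 5 := by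
      rcases eq_or_lt_of_le hj with h | h
      · rw [← h]
      · exact (isLittleO_pow_pow h).isBigO
    have h1 : (fun τ : ℝ => c⁻¹ * τ ^ j) =O[nhds (0:ℝ)] fun τ : ℝ => τ ^ 5 :=
      hp.const_mul_left _
    have h2 : (fun _ : ℝ => E) =O[nhds (0:ℝ)] fun _ : ℝ => (1:ℝ) :=
      isBigO_const_const E one_ne_zero _
    have := h1.smul h2
    simpa [div_eq_inv_mul, smul_eq_mul] using this
  have hD : (fun τ : ℝ => τ ^ 5 • Dmat n M K τ) =O[nhds (0:ℝ)] fun τ : ℝ => τ ^ 5 := by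
    have heq : (fun τ : ℝ => τ ^ 5 • Dmat n M K τ) = fun τ : ℝ =>
        ((τ ^ 6 / 144) • fromBlocks
            (M * (K * (M * (K * (M * K))))) 0 0 (K * (M * (K * (M * (K * M))))) -
          (τ ^ 7 / 192) • fromBlocks 0 0 (K * (M * (K * (M * (K * (M * K)))))) 0) -
          (τ ^ 9 / 3456) • fromBlocks 0 0
            (K * (M * (K * (M * (K * (M * (K * (M * K)))))))) 0 := by
      funext τ
      simp only [Dmat, sub_eq_add_neg, fromBlocks_neg, fromBlocks_add, fromBlocks_smul,
        smul_zero, smul_neg, neg_zero]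
      rw [fromBlocks_inj]
      refine ⟨by module, by module, by module, by module⟩
    rw [heq]
    exact ((hmono 6 (by norm_num) _ _).sub (hmono 7 (by norm_num) _ _)).sub
      (hmono 9 (by norm_num) _ _)
  have htail := exp_taylor_tail (Matrix.fromBlocks 0 M (-K) 0 :
    Matrix (Fin n ⊕ Fin n) (Fin n ⊕ Fin n) ℝ)
  have heq : (fun τ : ℝ =>
        Matrix.fromBlocks 1 0
              (-((τ / 2) • (K + (τ ^ 2 / 12) • ((K * M) * K)))) 1 *
            Matrix.fromBlocks 1 (τ • (M - (τ ^ 2 / 6) • (M * (K * M)))) 0 1 *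
            Matrix.fromBlocks 1 0
              (-((τ / 2) • (K + (τ ^ 2 / 12) • ((K * M) * K)))) 1 -
          NormedSpace.exp (τ • Matrix.fromBlocks 0 M (-K) 0)) = fun τ : ℝ =>
      τ ^ 5 • Dmat n M K τ -
        (NormedSpace.exp (τ • Matrix.fromBlocks 0 M (-K) 0) -
          ∑ k ∈ Finset.range 5,
            (τ ^ k * ((k.factorial : ℝ))⁻¹) • (Matrix.fromBlocks 0 M (-K) 0) ^ k) := by
    funext τ
    rw [kmk_eq]
    abel
  rw [heq]
  exact hD.sub htail
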